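/- The polynomial f = x_3x_1 + x_4x_2 + x_4x_1 + x_5x_2 is irreducible in the free algebra F⟨x_1,...,x_5⟩, but its image under the substitution x_i ↦ xy^i factors nontrivially in F⟨x,y⟩ as (xy^2 + xy^3)(yxy + y^2xy^2). -/

import Mathlib

noncomputable section

/-- The degree of a noncommutative polynomial in the free algebra
`F⟨X⟩ = MonoidAlgebra F (FreeMonoid X)`. -/
def ncDeg {F : Type*} [Field F] {X : Type*} (f : MonoidAlgebra F (FreeMonoid X)) : ℕ :=
  f.coeff.support.sup fun m => m.length

/-- The algebra homomorphism `F⟨X⟩ → F⟨x,y⟩` determined by its values `v i`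
on the variables, extended multiplicatively to monomials and linearly. -/
def phiGen {F : Type*} [Field F] {X : Type*}
    (v : X → MonoidAlgebra F (FreeMonoid Bool)) :
    MonoidAlgebra F (FreeMonoid X) →ₐ[F] MonoidAlgebra F (FreeMonoid Bool) :=
  MonoidAlgebra.lift F _ (FreeMonoid X) (FreeMonoid.lift v)

/-- the word `x y^k` over `{x,y}`, with `x = true`, `y = false`. -/
def wxy (k : ℕ) : FreeMonoid Bool :=
  FreeMonoid.of true * (FreeMonoid.of false) ^ k

open FreeMonoid

section Aux

variable {F : Type*} [Field F] {X : Type*}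

instance fmDecEq [DecidableEq X] : DecidableEq (FreeMonoid X) := fun a b =>
  decidable_of_iff (a.toList = b.toList)
    ⟨fun h => FreeMonoid.toList.injective h, fun h => congrArg _ h⟩

lemma ncDeg_def (f : MonoidAlgebra F (FreeMonoid X)) :
    ncDeg f = f.coeff.support.sup fun m => m.length := rfl

/-- Uniqueness of splittings in a free monoid under length constraints. -/
lemma word_split {w u w' u' : FreeMonoid X} (h : w' * u' = w * u)
    (hw : w'.length ≤ w.length) (hu : u'.length ≤ u.length) : w' = w ∧ u' = u := by
  have hlen : w'.length + u'.length = w.length + u.length := by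
    rw [← FreeMonoid.length_mul, ← FreeMonoid.length_mul, h]
  have hw' : w'.toList.length = w.toList.length := by
    have : w'.length = w.length := by omega
    exact this
  have hl : w'.toList ++ u'.toList = w.toList ++ u.toList := by
    rw [← FreeMonoid.toList_mul, ← FreeMonoid.toList_mul, h]
  obtain ⟨h1, h2⟩ := List.append_inj hl hw'
  exact ⟨FreeMonoid.toList.injective h1, FreeMonoid.toList.injective h2⟩

lemma mul_apply_top (g h : MonoidAlgebra F (FreeMonoid X)) {w u : FreeMonoid X}
    (hw : ∀ a ∈ g.coeff.support, a.length ≤ w.length)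
    (hu : ∀ a ∈ h.coeff.support, a.length ≤ u.length) :
    (g * h).coeff (w * u) = g.coeff w * h.coeff u := by
  classical
  rw [MonoidAlgebra.coeff_mul, Finsupp.sum]
  have key : ∀ a₁ ∈ g.coeff.support,
      (h.coeff.sum fun a₂ b₂ => if a₁ * a₂ = w * u then g.coeff a₁ * b₂ else 0)
        = if a₁ = w then g.coeff a₁ * h.coeff u else 0 := by
    intro a₁ ha₁
    rw [Finsupp.sum]
    by_cases hw1 : a₁ = w
    · subst hw1
      rw [if_pos rfl]
      have step : ∀ a₂ ∈ h.coeff.support,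
          (if a₁ * a₂ = a₁ * u then g.coeff a₁ * h.coeff a₂ else 0)
            = if a₂ = u then g.coeff a₁ * h.coeff a₂ else 0 := by
        intro a₂ _
        congr 1
        simp [mul_left_cancel_iff]
      rw [Finset.sum_congr rfl step, Finset.sum_ite_eq' h.coeff.support u (fun a₂ => g.coeff a₁ * h.coeff a₂)]
      by_cases hus : u ∈ h.coeff.support
      · rw [if_pos hus]
      · rw [if_neg hus, Finsupp.notMem_support_iff.1 hus, mul_zero]
    · rw [if_neg hw1]
      apply Finset.sum_eq_zero
      intro a₂ ha₂
      rw [if_neg]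
      intro hc
      exact hw1 (word_split hc (hw _ ha₁) (hu _ ha₂)).1
  rw [Finset.sum_congr rfl key, Finset.sum_ite_eq' g.coeff.support w (fun a₁ => g.coeff a₁ * h.coeff u)]
  by_cases hws : w ∈ g.coeff.support
  · rw [if_pos hws]
  · rw [if_neg hws, Finsupp.notMem_support_iff.1 hws, zero_mul]

lemma pair_split [DecidableEq X] (i j : X) (p : FreeMonoid X × FreeMonoid X) :
    p ∈ ({(1, of i * of j), (of i, of j), (of i * of j, 1)} :
        Finset (FreeMonoid X × FreeMonoid X))
      ↔ p.1 * p.2 = of i * of j := by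
  obtain ⟨a, b⟩ := p
  constructor
  · intro hp
    simp only [Finset.mem_insert, Finset.mem_singleton, Prod.mk.injEq] at hp
    rcases hp with ⟨rfl, rfl⟩ | ⟨rfl, rfl⟩ | ⟨rfl, rfl⟩ <;> simp
  · intro hp
    obtain ⟨la, rfl⟩ : ∃ la, ofList la = a := ⟨toList a, ofList_toList a⟩
    obtain ⟨lb, rfl⟩ : ∃ lb, ofList lb = b := ⟨toList b, ofList_toList b⟩
    have h : la ++ lb = [i, j] := by
      have := congrArg toList hp
      simpa using this
    simp only [Finset.mem_insert, Finset.mem_singleton, Prod.mk.injEq]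
    rcases la with _ | ⟨x, _ | ⟨y, t⟩⟩
    · left
      simp only [List.nil_append] at h
      subst h
      simp
    · right; left
      simp only [List.cons_append, List.nil_append, List.cons.injEq] at h
      obtain ⟨rfl, rfl⟩ := h
      simp [ofList_singleton]
    · right; right
      simp only [List.cons_append, List.cons.injEq] at h
      obtain ⟨rfl, rfl, h3⟩ := h
      obtain ⟨rfl, rfl⟩ := List.append_eq_nil_iff.1 h3
      simp [ofList_cons, ofList_singleton]

/-- Irreducibility of the quadratic `x₃x₁ + x₄x₂ + x₄x₁ + x₅x₂`. -/
lemma main_irred (F : Type*) [Field F] :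
    ¬ ∃ g' h' : MonoidAlgebra F (FreeMonoid (Fin 5)),
      0 < ncDeg g' ∧ 0 < ncDeg h' ∧
      (MonoidAlgebra.single (of (2 : Fin 5) * of 0) 1 + MonoidAlgebra.single (of 3 * of 1) 1
        + MonoidAlgebra.single (of 3 * of 0) 1 + MonoidAlgebra.single (of 4 * of 1) 1 :
        MonoidAlgebra F (FreeMonoid (Fin 5))) = g' * h' := by
  classical
  rintro ⟨g', h', hg', hh', hf⟩
  set P : MonoidAlgebra F (FreeMonoid (Fin 5)) :=
    MonoidAlgebra.single (of (2 : Fin 5) * of 0) 1 + MonoidAlgebra.single (of 3 * of 1) 1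
      + MonoidAlgebra.single (of 3 * of 0) 1 + MonoidAlgebra.single (of 4 * of 1) 1 with hPdef
  -- coefficients of `P`
  have hPapp : ∀ v : FreeMonoid (Fin 5), P.coeff v =
      (if of (2 : Fin 5) * of 0 = v then (1 : F) else 0)
      + (if of (3 : Fin 5) * of 1 = v then (1 : F) else 0)
      + (if of (3 : Fin 5) * of 0 = v then (1 : F) else 0)
      + (if of (4 : Fin 5) * of 1 = v then (1 : F) else 0) := by
    intro v
    rw [hPdef, MonoidAlgebra.coeff_add, MonoidAlgebra.coeff_add, MonoidAlgebra.coeff_add,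
      MonoidAlgebra.coeff_single, MonoidAlgebra.coeff_single, MonoidAlgebra.coeff_single,
      MonoidAlgebra.coeff_single, Finsupp.add_apply, Finsupp.add_apply, Finsupp.add_apply,
      Finsupp.single_apply, Finsupp.single_apply, Finsupp.single_apply, Finsupp.single_apply]
  -- support of `P` consists of words of length 2
  have hsub : ∀ v ∈ P.coeff.support, FreeMonoid.length v = 2 := by
    intro v hv
    rw [Finsupp.mem_support_iff] at hv
    by_contra hlen
    apply hv
    rw [hPapp v, if_neg (by rintro rfl; exact hlen (by decide)),
      if_neg (by rintro rfl; exact hlen (by decide)),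
      if_neg (by rintro rfl; exact hlen (by decide)),
      if_neg (by rintro rfl; exact hlen (by decide))]
    norm_num
  -- nonzero factors
  have hg0 : g' ≠ 0 := by
    rintro rfl; simp [ncDeg_def] at hg'
  have hh0 : h' ≠ 0 := by
    rintro rfl; simp [ncDeg_def] at hh'
  obtain ⟨w, hwmem, hwlen⟩ := Finset.exists_mem_eq_sup g'.coeff.support
    (Finsupp.support_nonempty_iff.2 (by simpa using hg0)) (fun m => m.length)
  obtain ⟨u, humem, hulen⟩ := Finset.exists_mem_eq_sup h'.coeff.support
    (Finsupp.support_nonempty_iff.2 (by simpa using hh0)) (fun m => m.length)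
  have hwle : ∀ a ∈ g'.coeff.support, FreeMonoid.length a ≤ FreeMonoid.length w := by
    intro a ha
    exact le_trans (Finset.le_sup (f := fun m : FreeMonoid (Fin 5) => m.length) ha)
      (le_of_eq hwlen)
  have hule : ∀ a ∈ h'.coeff.support, FreeMonoid.length a ≤ FreeMonoid.length u := by
    intro a ha
    exact le_trans (Finset.le_sup (f := fun m : FreeMonoid (Fin 5) => m.length) ha)
      (le_of_eq hulen)
  have htop : (g' * h').coeff (w * u) = g'.coeff w * h'.coeff u := mul_apply_top g' h' hwle hule
  have hne : P.coeff (w * u) ≠ 0 := by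
    rw [hf, htop]
    exact mul_ne_zero (Finsupp.mem_support_iff.1 hwmem) (Finsupp.mem_support_iff.1 humem)
  have hlen2 : FreeMonoid.length w + FreeMonoid.length u = 2 := by
    have := hsub _ (Finsupp.mem_support_iff.2 hne)
    rw [FreeMonoid.length_mul] at this
    exact this
  have h1 : 0 < FreeMonoid.length w := by
    have := hg'; rw [ncDeg_def, hwlen] at this; exact this
  have h2 : 0 < FreeMonoid.length u := by
    have := hh'; rw [ncDeg_def, hulen] at this; exact this
  have hw1 : FreeMonoid.length w = 1 := by omega
  have hu1 : FreeMonoid.length u = 1 := by omega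
  have hgle : ∀ a ∈ g'.coeff.support, FreeMonoid.length a ≤ 1 := by
    intro a ha; have := hwle a ha; omega
  have hhle : ∀ a ∈ h'.coeff.support, FreeMonoid.length a ≤ 1 := by
    intro a ha; have := hule a ha; omega
  -- the key coefficient identity
  have hcoeff : ∀ i j : Fin 5, P.coeff (of i * of j) = g'.coeff (of i) * h'.coeff (of j) := by
    intro i j
    have hanti := MonoidAlgebra.coeff_mul_antidiag g' h' (of i * of j)
      ({(1, of i * of j), (of i, of j), (of i * of j, 1)} :
        Finset (FreeMonoid (Fin 5) × FreeMonoid (Fin 5)))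
      (fun {p} => pair_split i j p)
    have hg2 : g'.coeff (of i * of j) = 0 := by
      by_contra hz
      have := hgle _ (Finsupp.mem_support_iff.2 hz)
      rw [FreeMonoid.length_mul, FreeMonoid.length_of, FreeMonoid.length_of] at this
      omega
    have hh2 : h'.coeff (of i * of j) = 0 := by
      by_contra hz
      have := hhle _ (Finsupp.mem_support_iff.2 hz)
      rw [FreeMonoid.length_mul, FreeMonoid.length_of, FreeMonoid.length_of] at this
      omega
    have hne1 : ((1 : FreeMonoid (Fin 5)), of i * of j) ∉
        ({(of i, of j), (of i * of j, 1)} :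
          Finset (FreeMonoid (Fin 5) × FreeMonoid (Fin 5))) := by
      have k1 : (1 : FreeMonoid (Fin 5)) ≠ of i := (one_ne_of i)
      have k2 : (1 : FreeMonoid (Fin 5)) ≠ of i * of j := by
        intro hh
        have := congrArg FreeMonoid.length hh
        simp at this
      simp [Prod.ext_iff, k1, k2]
    have hne2 : ((of i : FreeMonoid (Fin 5)), (of j : FreeMonoid (Fin 5))) ∉
        ({(of i * of j, 1)} : Finset (FreeMonoid (Fin 5) × FreeMonoid (Fin 5))) := by
      have k3 : (of j : FreeMonoid (Fin 5)) ≠ 1 := of_ne_one j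
      simp [Prod.ext_iff, k3]
    rw [hf, hanti, Finset.sum_insert hne1, Finset.sum_insert hne2, Finset.sum_singleton]
    simp only [hg2, hh2, mul_zero, zero_mul, add_zero, zero_add]
  -- evaluate the four relevant coefficients
  have c20 : g'.coeff (of (2 : Fin 5)) * h'.coeff (of (0 : Fin 5)) = 1 := by
    rw [← hcoeff 2 0, hPapp, if_pos rfl, if_neg (by decide), if_neg (by decide),
      if_neg (by decide)]
    norm_num
  have c41 : g'.coeff (of (4 : Fin 5)) * h'.coeff (of (1 : Fin 5)) = 1 := by
    rw [← hcoeff 4 1, hPapp, if_neg (by decide), if_neg (by decide), if_neg (by decide),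
      if_pos rfl]
    norm_num
  have c21 : g'.coeff (of (2 : Fin 5)) * h'.coeff (of (1 : Fin 5)) = 0 := by
    rw [← hcoeff 2 1, hPapp, if_neg (by decide), if_neg (by decide), if_neg (by decide),
      if_neg (by decide)]
    norm_num
  have c40 : g'.coeff (of (4 : Fin 5)) * h'.coeff (of (0 : Fin 5)) = 0 := by
    rw [← hcoeff 4 0, hPapp, if_neg (by decide), if_neg (by decide), if_neg (by decide),
      if_neg (by decide)]
    norm_num
  have : (1 : F) = 0 := by
    calc (1 : F) = (g'.coeff (of (2 : Fin 5)) * h'.coeff (of (0 : Fin 5)))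
          * (g'.coeff (of (4 : Fin 5)) * h'.coeff (of (1 : Fin 5))) := by rw [c20, c41, one_mul]
      _ = (g'.coeff (of (2 : Fin 5)) * h'.coeff (of (1 : Fin 5)))
          * (g'.coeff (of (4 : Fin 5)) * h'.coeff (of (0 : Fin 5))) := by ring
      _ = 0 := by rw [c21, zero_mul]
  exact one_ne_zero this

end Aux

/-- The polynomial `f = x₃x₁ + x₄x₂ + x₄x₁ + x₅x₂` is irreducible in
`F⟨x₁,…,x₅⟩` (variables indexed by `Fin 5`, with `x_i` the `(i-1)`-st index),
but its image under the substitution `x_i ↦ x y^i` factors nontrivially in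
`F⟨x,y⟩` as `(xy² + xy³)(yxy + y²xy²)`. -/
theorem irreducible_but_image_factors (F : Type*) [Field F] :
    letI of5 := MonoidAlgebra.of F (FreeMonoid (Fin 5))
    letI x : Fin 5 → MonoidAlgebra F (FreeMonoid (Fin 5)) := fun i => of5 (FreeMonoid.of i)
    letI f : MonoidAlgebra F (FreeMonoid (Fin 5)) := x 2 * x 0 + x 3 * x 1 + x 3 * x 0 + x 4 * x 1
    letI φ := phiGen (F := F) (fun i : Fin 5 =>
      MonoidAlgebra.of F (FreeMonoid Bool) (wxy ((i : ℕ) + 1)))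
    letI of2 := MonoidAlgebra.of F (FreeMonoid Bool)
    letI g : MonoidAlgebra F (FreeMonoid Bool) := of2 (wxy 2) + of2 (wxy 3)
    letI h : MonoidAlgebra F (FreeMonoid Bool) :=
      of2 (FreeMonoid.of false * wxy 1) + of2 ((FreeMonoid.of false) ^ 2 * wxy 2)
    (¬ ∃ g' h' : MonoidAlgebra F (FreeMonoid (Fin 5)),
        0 < ncDeg g' ∧ 0 < ncDeg h' ∧ f = g' * h') ∧
    φ f = g * h ∧ 0 < ncDeg g ∧ 0 < ncDeg h := by
  classical
  refine ⟨?_, ?_, ?_, ?_⟩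
  · -- irreducibility
    have hrw : (MonoidAlgebra.of F (FreeMonoid (Fin 5)) (FreeMonoid.of 2)
          * MonoidAlgebra.of F (FreeMonoid (Fin 5)) (FreeMonoid.of 0)
        + MonoidAlgebra.of F (FreeMonoid (Fin 5)) (FreeMonoid.of 3)
          * MonoidAlgebra.of F (FreeMonoid (Fin 5)) (FreeMonoid.of 1)
        + MonoidAlgebra.of F (FreeMonoid (Fin 5)) (FreeMonoid.of 3)
          * MonoidAlgebra.of F (FreeMonoid (Fin 5)) (FreeMonoid.of 0)
        + MonoidAlgebra.of F (FreeMonoid (Fin 5)) (FreeMonoid.of 4)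
          * MonoidAlgebra.of F (FreeMonoid (Fin 5)) (FreeMonoid.of 1))
        = (MonoidAlgebra.single (of (2 : Fin 5) * of 0) 1 + MonoidAlgebra.single (of 3 * of 1) 1
          + MonoidAlgebra.single (of 3 * of 0) 1 + MonoidAlgebra.single (of 4 * of 1) 1 :
          MonoidAlgebra F (FreeMonoid (Fin 5))) := by
      rw [← map_mul, ← map_mul, ← map_mul, ← map_mul]
      rfl
    rw [hrw]
    exact main_irred F
  · -- the factorization
    have L : ∀ (i : Fin 5) (k : ℕ), ((i : ℕ) + 1 = k) →
        phiGen (F := F) (fun i : Fin 5 =>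
            MonoidAlgebra.of F (FreeMonoid Bool) (wxy ((i : ℕ) + 1)))
          (MonoidAlgebra.of F (FreeMonoid (Fin 5)) (FreeMonoid.of i))
          = MonoidAlgebra.of F (FreeMonoid Bool) (wxy k) := by
      rintro i k rfl
      rw [phiGen, MonoidAlgebra.lift_of]
      rfl
    rw [map_add, map_add, map_add, map_mul, map_mul, map_mul, map_mul,
      L 2 3 rfl, L 0 1 rfl, L 3 4 rfl, L 1 2 rfl, L 4 5 rfl]
    rw [← map_mul, ← map_mul, ← map_mul, ← map_mul, mul_add, add_mul, add_mul,
      ← map_mul, ← map_mul, ← map_mul, ← map_mul]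
    rw [show wxy 2 * (FreeMonoid.of false * wxy 1) = wxy 3 * wxy 1 by decide,
      show wxy 3 * (FreeMonoid.of false * wxy 1) = wxy 4 * wxy 1 by decide,
      show wxy 2 * ((FreeMonoid.of false) ^ 2 * wxy 2) = wxy 4 * wxy 2 by decide,
      show wxy 3 * ((FreeMonoid.of false) ^ 2 * wxy 2) = wxy 5 * wxy 2 by decide]
    abel
  · -- 0 < ncDeg g
    have hmem : wxy 3 ∈ (MonoidAlgebra.of F (FreeMonoid Bool) (wxy 2)
        + MonoidAlgebra.of F (FreeMonoid Bool) (wxy 3)).coeff.support := by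
      rw [Finsupp.mem_support_iff, MonoidAlgebra.coeff_add, Finsupp.add_apply, MonoidAlgebra.of_apply,
        MonoidAlgebra.of_apply, MonoidAlgebra.coeff_single, MonoidAlgebra.coeff_single,
        Finsupp.single_eq_of_ne (by decide), Finsupp.single_eq_same]
      norm_num
    calc 0 < FreeMonoid.length (wxy 3) := by decide
      _ ≤ _ := Finset.le_sup (f := fun m : FreeMonoid Bool => m.length) hmem
  · -- 0 < ncDeg h
    have hmem : (FreeMonoid.of false) ^ 2 * wxy 2 ∈
        (MonoidAlgebra.of F (FreeMonoid Bool) (FreeMonoid.of false * wxy 1)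
          + MonoidAlgebra.of F (FreeMonoid Bool) ((FreeMonoid.of false) ^ 2 * wxy 2)).coeff.support := by
      rw [Finsupp.mem_support_iff, MonoidAlgebra.coeff_add, Finsupp.add_apply, MonoidAlgebra.of_apply,
        MonoidAlgebra.of_apply, MonoidAlgebra.coeff_single, MonoidAlgebra.coeff_single,
        Finsupp.single_eq_of_ne (by decide), Finsupp.single_eq_same]
      norm_num
    calc 0 < FreeMonoid.length ((FreeMonoid.of false) ^ 2 * wxy 2) := by decide
      _ ≤ _ := Finset.le_sup (f := fun m : FreeMonoid Bool => m.length) hmem
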